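/- Let (V_x)_{x∈E} be subspaces of a finite-dimensional K-vector space V, and let (W₁,W₂,W₃) be three distinct lines in K² in general position (a linear representation of U_{2,3}). Define g on E×{1,2,3} by g(S) = dim(∑_{(x,i)∈S} V_x ⊗ W_i). Then for all A₁,A₂,A₃ ⊆ E, writing U_i = ∑_{x∈A_i} V_x and f(A) = dim(∑_{x∈A} V_x): g(A₁×{1} ∪ A₂×{2} ∪ A₃×{3}) = f(A₁) + f(A₂) + f(A₃) - dim(U₁ ∩ U₂ ∩ U₃). -/

import Mathlib

open TensorProduct Module Submodule

section aux
variable {K V : Type*} [Field K] [AddCommGroup V] [Module K V]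

/-- `v ↦ fun j => w j • v`. -/
noncomputable def Lw (w : Fin 2 → K) : V →ₗ[K] (Fin 2 → V) :=
  LinearMap.pi fun j => w j • LinearMap.id

@[simp] lemma Lw_apply (w : Fin 2 → K) (v : V) (j : Fin 2) : Lw w v j = w j • v := rfl

lemma Lw_injective {w : Fin 2 → K} (hw : w ≠ 0) :
    Function.Injective (Lw (V := V) w) := by
  obtain ⟨j, hj⟩ := Function.ne_iff.mp hw
  simp only [Pi.zero_apply] at hj
  intro x y h
  have := congrFun h j
  simp only [Lw_apply] at this
  exact smul_right_injective V hj this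

lemma finrank_map_Lw [FiniteDimensional K V] {w : Fin 2 → K} (hw : w ≠ 0)
    (U : Submodule K V) : finrank K (U.map (Lw w)) = finrank K U :=
  (Submodule.equivMapOfInjective _ (Lw_injective hw) U).finrank_eq.symm

lemma inf_map_Lw (U₁ U₂ : Submodule K V) {w₁ w₂ : Fin 2 → K}
    (h : w₁ 0 * w₂ 1 - w₂ 0 * w₁ 1 ≠ 0) :
    U₁.map (Lw w₁) ⊓ U₂.map (Lw w₂) = ⊥ := by
  rw [eq_bot_iff]
  rintro z ⟨⟨x, hx, rfl⟩, ⟨y, hy, hxy⟩⟩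
  have h0 := congrFun hxy 0
  have h1 := congrFun hxy 1
  simp only [Lw_apply] at h0 h1
  have hx0 : (w₁ 0 * w₂ 1 - w₂ 0 * w₁ 1) • x = 0 := by
    linear_combination (norm := module) w₂ 0 • h1 - w₂ 1 • h0
  have : x = 0 := by
    rcases smul_eq_zero.mp hx0 with h' | h'
    · exact absurd h' h
    · exact h'
  simp [this]

lemma inf_map_Lw3 (U₁ U₂ U₃ : Submodule K V) {w₁ w₂ w₃ : Fin 2 → K}
    (h12 : w₁ 0 * w₂ 1 - w₂ 0 * w₁ 1 ≠ 0) (h13 : w₁ 0 * w₃ 1 - w₃ 0 * w₁ 1 ≠ 0)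
    (h23 : w₂ 0 * w₃ 1 - w₃ 0 * w₂ 1 ≠ 0) :
    (U₁.map (Lw w₁) ⊔ U₂.map (Lw w₂)) ⊓ U₃.map (Lw w₃)
      = (U₁ ⊓ U₂ ⊓ U₃).map (Lw w₃) := by
  have hc₁ : w₃ 0 * w₂ 1 - w₂ 0 * w₃ 1 ≠ 0 := fun hc => h23 (by linear_combination -hc)
  have hc₂ : w₁ 0 * w₃ 1 - w₃ 0 * w₁ 1 ≠ 0 := h13
  apply le_antisymm
  · rintro z ⟨hz, v, hv3, rfl⟩
    obtain ⟨p, ⟨x, hx, rfl⟩, q, ⟨y, hy, rfl⟩, hpq⟩ := Submodule.mem_sup.mp hz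
    have e0 := congrFun hpq 0
    have e1 := congrFun hpq 1
    simp only [Lw_apply, Pi.add_apply] at e0 e1
    have hxv : (w₁ 0 * w₂ 1 - w₂ 0 * w₁ 1) • x = (w₃ 0 * w₂ 1 - w₂ 0 * w₃ 1) • v := by
      linear_combination (norm := module) w₂ 1 • e0 - w₂ 0 • e1
    have hyv : (w₁ 0 * w₂ 1 - w₂ 0 * w₁ 1) • y = (w₁ 0 * w₃ 1 - w₃ 0 * w₁ 1) • v := by
      linear_combination (norm := module) w₁ 0 • e1 - w₁ 1 • e0
    have hv1 : v ∈ U₁ := by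
      have : ((w₃ 0 * w₂ 1 - w₂ 0 * w₃ 1)⁻¹ * (w₁ 0 * w₂ 1 - w₂ 0 * w₁ 1)) • x = v := by
        rw [mul_smul, hxv, smul_smul, inv_mul_cancel₀ hc₁, one_smul]
      exact this ▸ U₁.smul_mem _ hx
    have hv2 : v ∈ U₂ := by
      have : ((w₁ 0 * w₃ 1 - w₃ 0 * w₁ 1)⁻¹ * (w₁ 0 * w₂ 1 - w₂ 0 * w₁ 1)) • y = v := by
        rw [mul_smul, hyv, smul_smul, inv_mul_cancel₀ hc₂, one_smul]
      exact this ▸ U₂.smul_mem _ hy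
    exact ⟨v, ⟨⟨hv1, hv2⟩, hv3⟩, rfl⟩
  · rintro z ⟨v, ⟨⟨hv1, hv2⟩, hv3⟩, rfl⟩
    refine ⟨?_, ⟨v, hv3, rfl⟩⟩
    set D := w₁ 0 * w₂ 1 - w₂ 0 * w₁ 1 with hD
    set α := (w₃ 0 * w₂ 1 - w₂ 0 * w₃ 1) / D with hα
    set β := (w₁ 0 * w₃ 1 - w₃ 0 * w₁ 1) / D with hβ
    have key : ∀ j : Fin 2, α * w₁ j + β * w₂ j = w₃ j := by
      intro j
      rw [hα, hβ, hD]
      have hD0 : w₁ 0 * w₂ 1 - w₂ 0 * w₁ 1 ≠ 0 := h12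
      fin_cases j <;> (simp only [Fin.zero_eta, Fin.mk_one]; rw [div_mul_eq_mul_div, div_mul_eq_mul_div, ← add_div, div_eq_iff hD0]; ring)
    refine Submodule.mem_sup.mpr ⟨Lw w₁ (α • v), ⟨α • v, U₁.smul_mem α hv1, rfl⟩,
      Lw w₂ (β • v), ⟨β • v, U₂.smul_mem β hv2, rfl⟩, ?_⟩
    funext j
    simp only [Pi.add_apply, Lw_apply]
    rw [smul_smul, smul_smul, ← add_smul, mul_comm (w₁ j), mul_comm (w₂ j), key j]

lemma key_rank [FiniteDimensional K V] (U₁ U₂ U₃ : Submodule K V) {w₁ w₂ w₃ : Fin 2 → K}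
    (h12 : w₁ 0 * w₂ 1 - w₂ 0 * w₁ 1 ≠ 0) (h13 : w₁ 0 * w₃ 1 - w₃ 0 * w₁ 1 ≠ 0)
    (h23 : w₂ 0 * w₃ 1 - w₃ 0 * w₂ 1 ≠ 0) :
    finrank K ↥(U₁.map (Lw w₁) ⊔ U₂.map (Lw w₂) ⊔ U₃.map (Lw w₃))
      + finrank K ↥(U₁ ⊓ U₂ ⊓ U₃)
      = finrank K ↥U₁ + finrank K ↥U₂ + finrank K ↥U₃ := by
  have hw₁ : w₁ ≠ 0 := fun h => h12 (by simp [h])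
  have hw₂ : w₂ ≠ 0 := fun h => h12 (by simp [h])
  have hw₃ : w₃ ≠ 0 := fun h => h13 (by simp [h])
  have e1 := Submodule.finrank_sup_add_finrank_inf_eq (U₁.map (Lw w₁)) (U₂.map (Lw w₂))
  have e2 := Submodule.finrank_sup_add_finrank_inf_eq
    (U₁.map (Lw w₁) ⊔ U₂.map (Lw w₂)) (U₃.map (Lw w₃))
  rw [inf_map_Lw U₁ U₂ h12, finrank_bot, add_zero] at e1
  rw [inf_map_Lw3 U₁ U₂ U₃ h12 h13 h23, finrank_map_Lw hw₃, finrank_map_Lw hw₃] at e2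
  rw [finrank_map_Lw hw₁, finrank_map_Lw hw₂] at e1
  omega

lemma exists_span_line {W : Submodule K (Fin 2 → K)} (h : finrank K ↥W = 1) :
    ∃ w : Fin 2 → K, w ≠ 0 ∧ W = span K {w} := by
  obtain ⟨v, hv0, hv⟩ := finrank_eq_one_iff'.mp h
  refine ⟨(v : Fin 2 → K), by simpa using hv0, le_antisymm ?_ ?_⟩
  · intro x hx
    obtain ⟨c, hc⟩ := hv ⟨x, hx⟩
    exact Submodule.mem_span_singleton.mpr ⟨c, congrArg Subtype.val hc⟩
  · rw [Submodule.span_le, Set.singleton_subset_iff]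
    exact v.2

lemma det_ne_zero_of_spans_ne {w w' : Fin 2 → K} (hw : w ≠ 0) (hw' : w' ≠ 0)
    (h : span K ({w} : Set (Fin 2 → K)) ≠ span K {w'}) :
    w 0 * w' 1 - w' 0 * w 1 ≠ 0 := by
  intro hd
  apply h
  have hd' : w 0 * w' 1 = w' 0 * w 1 := by linear_combination hd
  have hcw : ∃ c : K, c ≠ 0 ∧ w' = c • w := by
    by_cases h0 : w 0 = 0
    · have h1 : w 1 ≠ 0 := by
        intro h1; exact hw (funext fun j => by fin_cases j <;> simp [h0, h1])
      have hc0 : w' 0 = 0 := by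
        have := hd'; rw [h0, zero_mul] at this
        exact (mul_eq_zero.mp this.symm).resolve_right h1
      refine ⟨w' 1 / w 1, ?_, ?_⟩
      · intro hc
        have : w' 1 = 0 := by
          field_simp at hc; simpa using hc
        exact hw' (funext fun j => by fin_cases j <;> simp [hc0, this])
      · funext j; fin_cases j <;> simp [h0, hc0] <;> field_simp
    · refine ⟨w' 0 / w 0, ?_, ?_⟩
      · intro hc
        have hc0 : w' 0 = 0 := by field_simp at hc; simpa using hc
        have hc1 : w' 1 = 0 := by
          have := hd'; rw [hc0, zero_mul] at this
          exact (mul_eq_zero.mp this).resolve_left h0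
        exact hw' (funext fun j => by fin_cases j <;> simp [hc0, hc1])
      · funext j; fin_cases j
        · simp; field_simp
        · show w' 1 = (w' 0 / w 0) • w 1
          rw [smul_eq_mul]; field_simp; linear_combination hd
  obtain ⟨c, hc, rfl⟩ := hcw
  exact (Submodule.span_singleton_smul_eq (IsUnit.mk0 c hc) w).symm

lemma tensor_line_eq (U : Submodule K V) (w : Fin 2 → K) :
    (LinearMap.range (TensorProduct.map U.subtype (span K {w}).subtype)).map
      (TensorProduct.piScalarRight K K V (Fin 2)).toLinearMap
      = U.map (Lw w) := by
  apply le_antisymm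
  · rw [TensorProduct.range_map_eq_span_tmul, Submodule.map_span, Submodule.span_le]
    rintro _ ⟨_, ⟨u, n, rfl⟩, rfl⟩
    obtain ⟨c, hc⟩ := Submodule.mem_span_singleton.mp n.2
    refine ⟨c • (u : V), U.smul_mem c u.2, ?_⟩
    have hn : (n : Fin 2 → K) = c • w := hc.symm
    funext j
    simp [hn, Lw, smul_smul, mul_comm]
  · rintro _ ⟨u, hu, rfl⟩
    refine ⟨TensorProduct.map U.subtype (span K {w}).subtype
      ((⟨u, hu⟩ : U) ⊗ₜ ⟨w, Submodule.mem_span_singleton_self w⟩), ⟨_, rfl⟩, ?_⟩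
    funext j
    simp [Lw]


end aux

open TensorProduct

theorem stmt_6 {K V : Type*} [Field K] [AddCommGroup V] [Module K V]
    [FiniteDimensional K V] {E : Type*} [DecidableEq E]
    (Vx : E → Submodule K V) (W : Fin 3 → Submodule K (Fin 2 → K))
    (hW1 : ∀ i, Module.finrank K ↥(W i) = 1)
    (hWd : ∀ i j, i ≠ j → W i ≠ W j)
    (f : Finset E → ℝ)
    (hf : ∀ A : Finset E, f A = Module.finrank K ↥(⨆ x ∈ A, Vx x))
    (g : Finset (E × Fin 3) → ℝ)
    (hg : ∀ S : Finset (E × Fin 3), g S = Module.finrank K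
      ↥(⨆ p ∈ S, LinearMap.range
          (TensorProduct.map (Vx p.1).subtype (W p.2).subtype)))
    (A₁ A₂ A₃ : Finset E) :
    g (A₁ ×ˢ {0} ∪ A₂ ×ˢ {1} ∪ A₃ ×ˢ {2}) =
      f A₁ + f A₂ + f A₃ -
        Module.finrank K ↥((⨆ x ∈ A₁, Vx x) ⊓ (⨆ x ∈ A₂, Vx x) ⊓ (⨆ x ∈ A₃, Vx x)) := by
  classical
  choose w hw0 hwsp using fun i => exists_span_line (hW1 i)
  have det : ∀ i j, i ≠ j → w i 0 * w j 1 - w j 0 * w i 1 ≠ 0 := fun i j hij =>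
    det_ne_zero_of_spans_ne (hw0 i) (hw0 j)
      (by rw [← hwsp i, ← hwsp j]; exact hWd i j hij)
  set e := TensorProduct.piScalarRight K K V (Fin 2) with he
  set Rp : E × Fin 3 → Submodule K (V ⊗[K] (Fin 2 → K)) := fun p =>
    LinearMap.range (TensorProduct.map (Vx p.1).subtype (W p.2).subtype) with hRp
  set U₁ := ⨆ x ∈ A₁, Vx x with hU₁
  set U₂ := ⨆ x ∈ A₂, Vx x with hU₂
  set U₃ := ⨆ x ∈ A₃, Vx x with hU₃
  have hinner : ∀ (x : E) (i : Fin 3),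
      Submodule.map e.toLinearMap (Rp (x, i)) = (Vx x).map (Lw (w i)) := by
    intro x i
    rw [hRp]
    dsimp only
    rw [hwsp i]
    exact tensor_line_eq (Vx x) (w i)
  have hprod : ∀ (A : Finset E) (i : Fin 3),
      (⨆ p ∈ (A ×ˢ ({i} : Finset (Fin 3))), Rp p) = ⨆ x ∈ A, Rp (x, i) := by
    intro A i
    apply le_antisymm
    · refine iSup₂_le fun p hp => ?_
      obtain ⟨hp1, hp2⟩ := Finset.mem_product.mp hp
      have h2 : p.2 = i := Finset.mem_singleton.mp hp2
      have hpp : p = (p.1, i) := by rw [← h2]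
      rw [hpp] at hp1 ⊢
      exact le_iSup₂ (f := fun x (_ : x ∈ A) => Rp (x, i)) p.1 hp1
    · exact iSup₂_le fun x hx => le_iSup₂ (f := fun p (_ : p ∈ A ×ˢ ({i} : Finset (Fin 3))) => Rp p)
        (x, i) (Finset.mem_product.mpr ⟨hx, Finset.mem_singleton_self i⟩)
  have hpiece : ∀ (A : Finset E) (i : Fin 3),
      Submodule.map e.toLinearMap (⨆ x ∈ A, Rp (x, i)) = (⨆ x ∈ A, Vx x).map (Lw (w i)) := by
    intro A i
    calc Submodule.map e.toLinearMap (⨆ x ∈ A, Rp (x, i))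
        = ⨆ x ∈ A, Submodule.map e.toLinearMap (Rp (x, i)) := by
          simp only [Submodule.map_iSup]
      _ = ⨆ x ∈ A, (Vx x).map (Lw (w i)) :=
          iSup_congr fun x => iSup_congr fun _ => hinner x i
      _ = (⨆ x ∈ A, Vx x).map (Lw (w i)) := by
          simp only [Submodule.map_iSup]
  have hT : Submodule.map e.toLinearMap
        (⨆ p ∈ (A₁ ×ˢ {0} ∪ A₂ ×ˢ {1} ∪ A₃ ×ˢ {2} : Finset (E × Fin 3)), Rp p)
      = U₁.map (Lw (w 0)) ⊔ U₂.map (Lw (w 1)) ⊔ U₃.map (Lw (w 2)) := by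
    rw [Finset.iSup_union, Finset.iSup_union, hprod A₁ 0, hprod A₂ 1, hprod A₃ 2,
      Submodule.map_sup, Submodule.map_sup, hpiece A₁ 0, hpiece A₂ 1, hpiece A₃ 2,
      hU₁, hU₂, hU₃]
  have hnat : Module.finrank K
        ↥(⨆ p ∈ (A₁ ×ˢ {0} ∪ A₂ ×ˢ {1} ∪ A₃ ×ˢ {2} : Finset (E × Fin 3)), Rp p)
        + Module.finrank K ↥(U₁ ⊓ U₂ ⊓ U₃)
      = Module.finrank K ↥U₁ + Module.finrank K ↥U₂ + Module.finrank K ↥U₃ := by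
    have hfr := LinearEquiv.finrank_map_eq e
      (⨆ p ∈ (A₁ ×ˢ {0} ∪ A₂ ×ˢ {1} ∪ A₃ ×ˢ {2} : Finset (E × Fin 3)), Rp p)
    rw [← hfr, hT]
    exact key_rank U₁ U₂ U₃ (det 0 1 (by decide)) (det 0 2 (by decide)) (det 1 2 (by decide))
  rw [hg, hf, hf, hf]
  have hcast : (Module.finrank K
        ↥(⨆ p ∈ (A₁ ×ˢ {0} ∪ A₂ ×ˢ {1} ∪ A₃ ×ˢ {2} : Finset (E × Fin 3)), Rp p) : ℝ)
        + (Module.finrank K ↥(U₁ ⊓ U₂ ⊓ U₃) : ℝ)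
      = (Module.finrank K ↥U₁ : ℝ) + Module.finrank K ↥U₂ + Module.finrank K ↥U₃ := by
    exact_mod_cast congrArg (Nat.cast : ℕ → ℝ) hnat
  linarith [hcast]
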